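/- In any MM instance, every matching that is both stable and efficient is student-optimal, i.e., if μ is a stable matching that is dominated by no matching, then every student weakly prefers his outcome under μ to his outcome under every stable matching. -/

import Mathlib

/-!
Basic framework for many-to-one matching (MM) instances with two-sided
preferences, following the paper "Optimal Capacity Modification for
Many-to-One Matching Problems".

Preference/priority orders are encoded by rank functions (`rkS`, `rkW`):
a smaller rank means more preferred; ranks are required to be injective
on the respective sets of acceptable partners.
-/

structure MM (U W : Type*) [Fintype U] [Fintype W] [DecidableEq U] [DecidableEq W] where
  /-- acceptable schools of a student -/
  accS : U → Finset W
  /-- students on a school's priority list -/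
  accW : W → Finset U
  /-- every student has a nonempty preference list -/
  acc_ne : ∀ u, (accS u).Nonempty
  /-- mutual acceptability -/
  acc_iff : ∀ u w, u ∈ accW w ↔ w ∈ accS u
  /-- rank of a school in a student's list (smaller = better) -/
  rkS : U → W → ℕ
  /-- rank of a student in a school's priority list (smaller = better) -/
  rkW : W → U → ℕ
  rkS_inj : ∀ u, ∀ w1 ∈ accS u, ∀ w2 ∈ accS u, rkS u w1 = rkS u w2 → w1 = w2
  rkW_inj : ∀ w, ∀ u1 ∈ accW w, ∀ u2 ∈ accW w, rkW w u1 = rkW w u2 → u1 = u2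
  /-- capacities -/
  q : W → ℕ
  q_pos : ∀ w, 1 ≤ q w

namespace MM

variable {U W : Type*} [Fintype U] [Fintype W] [DecidableEq U] [DecidableEq W]

/-- `μ` is a (partial) matching: it assigns only acceptable schools. -/
def IsMatching (I : MM U W) (μ : U → Option W) : Prop :=
  ∀ u w, μ u = some w → w ∈ I.accS u

/-- the set of students assigned to school `w` -/
def assignedTo (μ : U → Option W) (w : W) : Set U := {u | μ u = some w}

/-- the number of students assigned to school `w` -/
noncomputable def load (μ : U → Option W) (w : W) : ℕ := (assignedTo μ w).ncard

/-- `μ` is feasible: it is a matching respecting all capacities. -/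
def Feasible (I : MM U W) (μ : U → Option W) : Prop :=
  I.IsMatching μ ∧ ∀ w, load μ w ≤ I.q w

/-- `μ` is perfect: every student is matched. -/
def Perfect (μ : U → Option W) : Prop := ∀ u, μ u ≠ none

/-- student `u` strictly prefers school `w` to the outcome `o`
(where `o = none` means being unmatched) -/
def PrefOut (I : MM U W) (u : U) (w : W) (o : Option W) : Prop :=
  o = none ∨ ∃ w', o = some w' ∧ I.rkS u w < I.rkS u w'

/-- `(u,w)` is a blocking pair of `μ` -/
def Blocks (I : MM U W) (μ : U → Option W) (u : U) (w : W) : Prop :=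
  u ∈ I.accW w ∧ I.PrefOut u w (μ u) ∧
    (load μ w < I.q w ∨ ∃ u' ∈ assignedTo μ w, I.rkW w u < I.rkW w u')

/-- `μ` is stable: feasible and with no blocking pair -/
def Stable (I : MM U W) (μ : U → Option W) : Prop :=
  I.Feasible μ ∧ ∀ u w, ¬ I.Blocks μ u w

/-- student `u` is strictly better off under `μ` than under `σ` -/
def Better (I : MM U W) (u : U) (μ σ : U → Option W) : Prop :=
  ∃ w, μ u = some w ∧ I.PrefOut u w (σ u)

/-- student `u` weakly prefers `μ` to `σ` -/
def WeakPref (I : MM U W) (u : U) (μ σ : U → Option W) : Prop :=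
  μ u = σ u ∨ I.Better u μ σ

/-- `μ` dominates `σ` -/
def Dominates (I : MM U W) (μ σ : U → Option W) : Prop :=
  (∀ u, I.WeakPref u μ σ) ∧ ∃ u, I.Better u μ σ

/-- `μ` is (Pareto-)efficient: feasible and dominated by no feasible matching -/
def Efficient (I : MM U W) (μ : U → Option W) : Prop :=
  I.Feasible μ ∧ ∀ σ, I.Feasible σ → ¬ I.Dominates σ μ

/-- `μ` is a student-optimal stable matching -/
def StudentOptimal (I : MM U W) (μ : U → Option W) : Prop :=
  I.Stable μ ∧ ∀ σ, I.Stable σ → ∀ u, I.WeakPref u μ σ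

/-- increase capacities by the vector `r` -/
def incCap (I : MM U W) (r : W → ℕ) : MM U W :=
  { I with
    q := fun w => I.q w + r w
    q_pos := fun w => le_trans (I.q_pos w) (Nat.le_add_right _ _) }

/-- replace the capacities by `q'` -/
def withCap (I : MM U W) (q' : W → ℕ) (hq' : ∀ w, 1 ≤ q' w) : MM U W :=
  { I with
    q := q'
    q_pos := hq' }

/-- student `x` justifiedly envies student `y` under `σ` -/
def JEnvy (I : MM U W) (σ : U → Option W) (x y : U) : Prop :=
  ∃ w, σ y = some w ∧ x ∈ I.accW w ∧ I.rkW w x < I.rkW w y ∧ I.PrefOut x w (σ x)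

/-- the set of students unmatched under `μ` -/
def unmatchedSet (μ : U → Option W) : Set U := {u | μ u = none}

/-- `v` is an assignment vector: it assigns to each student unmatched
under `μhat` an acceptable school -/
def IsAsgVec (I : MM U W) (μhat : U → Option W) (v : U → W) : Prop :=
  ∀ u, μhat u = none → v u ∈ I.accS u

/-- `μhat + v` : additionally match every unmatched student `u` to `v u` -/
def extend (μhat : U → Option W) (v : U → W) : U → Option W :=
  fun u => some ((μhat u).getD (v u))

/-- JE(v): the assigned students who justifiedly envy some unassigned student
under `μhat + v` -/
def JEset (I : MM U W) (μhat : U → Option W) (v : U → W) : Set U :=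
  {x | μhat x ≠ none ∧ ∃ y, μhat y = none ∧ I.JEnvy (extend μhat v) x y}

/-- `n_je(v)` -/
noncomputable def nje (I : MM U W) (μhat : U → Option W) (v : U → W) : ℕ :=
  (I.JEset μhat v).ncard

end MM

namespace MM

/-- Consequence of stability: if `u` finds `w` acceptable, prefers `w` to its
outcome under `σ`, and is not matched to `w`, then `w` is full and every
student matched to `w` beats `u`. -/
lemma block_fact {U W : Type*} [Fintype U] [Fintype W] [DecidableEq U] [DecidableEq W]
    (I : MM U W) {σ : U → Option W} (hσ : I.Stable σ) {u : U} {w : W}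
    (hacc : u ∈ I.accW w) (hpref : I.PrefOut u w (σ u)) (hne : σ u ≠ some w) :
    I.q w ≤ load σ w ∧ ∀ s, σ s = some w → I.rkW w s < I.rkW w u := by
  have hnb := hσ.2 u w
  have h3 : ¬ (load σ w < I.q w ∨ ∃ u' ∈ assignedTo σ w, I.rkW w u < I.rkW w u') :=
    fun hc => hnb ⟨hacc, hpref, hc⟩
  push_neg at h3
  refine ⟨h3.1, fun s hs => ?_⟩
  have hsa : s ∈ assignedTo σ w := hs
  have hle : I.rkW w s ≤ I.rkW w u := h3.2 s hsa
  refine lt_of_le_of_ne hle (fun he => ?_)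
  have hsacc : s ∈ I.accW w := (I.acc_iff s w).mpr (hσ.1.1 s w hs)
  have : s = u := I.rkW_inj w s hsacc u hacc he
  exact hne (this ▸ hs)

end MM

/-- every stable and efficient matching is student-optimal. -/
theorem statement_2 {U W : Type*} [Fintype U] [Fintype W] [DecidableEq U] [DecidableEq W]
    (I : MM U W) (μ : U → Option W)
    (hst : I.Stable μ)
    (heff : ∀ σ, I.Feasible σ → ¬ I.Dominates σ μ) :
    ∀ σ, I.Stable σ → ∀ u, I.WeakPref u μ σ := by
  intro σ hσ u
  by_contra hw
  have hμm : I.IsMatching μ := hst.1.1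
  have hσm : I.IsMatching σ := hσ.1.1
  -- the student-wise join of μ and σ
  set τ : U → Option W := fun v =>
    match μ v, σ v with
    | none, o => o
    | some w0, none => some w0
    | some w0, some w1 => if I.rkS v w1 < I.rkS v w0 then some w1 else some w0
    with hτdef
  have hτ_eq : ∀ v, τ v = match μ v, σ v with
      | none, o => o
      | some w0, none => some w0
      | some w0, some w1 => if I.rkS v w1 < I.rkS v w0 then some w1 else some w0 :=
    fun v => rfl
  -- τ is a matching
  have hτm : I.IsMatching τ := by
    intro v w hvw
    rw [hτ_eq v] at hvw
    rcases hμv : μ v with _ | w0 <;> rcases hσv : σ v with _ | w1 <;>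
      simp [hμv, hσv] at hvw
    · exact hvw ▸ hσm v w1 hσv
    · exact hvw ▸ hμm v w0 hμv
    · split at hvw
      · exact (Option.some_inj.mp hvw) ▸ hσm v w1 hσv
      · exact (Option.some_inj.mp hvw) ▸ hμm v w0 hμv
  -- τ is feasible
  have hτfeas : I.Feasible τ := by
    refine ⟨hτm, fun w => ?_⟩
    by_cases hB : ∃ b, σ b = some w ∧ I.PrefOut b w (μ b)
    · -- some student strictly prefers w (under σ) to its μ-outcome:
      -- every τ-assignee of w is then a σ-assignee of w
      obtain ⟨b, hbσ, hbpref⟩ := hB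
      have hbacc : b ∈ I.accW w := (I.acc_iff b w).mpr (hσm b w hbσ)
      have hbne : μ b ≠ some w := by
        intro hbw
        rcases hbpref with h | ⟨w', hw', hlt⟩
        · rw [hbw] at h; exact Option.some_ne_none w h
        · rw [hbw] at hw'
          rw [Option.some_inj.mp hw'] at hlt
          exact lt_irrefl _ hlt
      obtain ⟨_, hμbeats⟩ := I.block_fact hst hbacc hbpref hbne
      have hsub : MM.assignedTo τ w ⊆ MM.assignedTo σ w := by
        intro v hv
        have hvw : τ v = some w := hv
        rw [hτ_eq v] at hvw
        -- key: μ v = some w, σ v ≠ some w, v weakly prefers w ⇒ contradiction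
        have key : μ v = some w → σ v ≠ some w → I.PrefOut v w (σ v) → False := by
          intro hμv hσne hpref
          have hvacc : v ∈ I.accW w := (I.acc_iff v w).mpr (hμm v w hμv)
          obtain ⟨_, hσbeats⟩ := I.block_fact hσ hvacc hpref hσne
          have h1 : I.rkW w b < I.rkW w v := hσbeats b hbσ
          have h2 : I.rkW w v < I.rkW w b := hμbeats v hμv
          omega
        rcases hμv : μ v with _ | w0 <;> rcases hσv : σ v with _ | w1 <;>
          simp [hμv, hσv] at hvw
        · show σ v = some w; rw [hσv, hvw]
        · exact absurd (key (by rw [hμv, hvw]) (by simp [hσv]) (Or.inl hσv)) not_false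
        · split at hvw
          · show σ v = some w; rw [hσv, hvw]
          · rename_i hnlt
            rw [Option.some_inj] at hvw
            subst hvw
            by_cases hww : w1 = w0
            · show σ v = some w0; rw [hσv, hww]
            · exfalso
              have hw0acc := hμm v w0 hμv
              have hw1acc := hσm v w1 hσv
              have hlt : I.rkS v w0 < I.rkS v w1 :=
                lt_of_le_of_ne (not_lt.mp hnlt)
                  (fun he => hww (I.rkS_inj v w1 hw1acc w0 hw0acc he.symm))
              exact key hμv (by simp [hσv]; exact fun h => hww h)
                (Or.inr ⟨w1, hσv, hlt⟩)
      calc MM.load τ w ≤ MM.load σ w :=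
              Set.ncard_le_ncard hsub (Set.toFinite _)
        _ ≤ I.q w := hσ.1.2 w
    · -- nobody strictly prefers w under σ: every τ-assignee of w is a μ-assignee
      push_neg at hB
      have hsub : MM.assignedTo τ w ⊆ MM.assignedTo μ w := by
        intro v hv
        have hvw : τ v = some w := hv
        rw [hτ_eq v] at hvw
        rcases hμv : μ v with _ | w0 <;> rcases hσv : σ v with _ | w1 <;>
          simp [hμv, hσv] at hvw
        · exact absurd (Or.inl hμv : I.PrefOut v w (μ v))
            (hB v (by rw [hσv, hvw]))
        · show μ v = some w; rw [hμv, hvw]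
        · split at hvw
          · rename_i hlt
            rw [Option.some_inj] at hvw
            subst hvw
            exact absurd (Or.inr ⟨w0, hμv, hlt⟩ : I.PrefOut v w1 (μ v))
              (hB v hσv)
          · show μ v = some w; rw [hμv, hvw]
      calc MM.load τ w ≤ MM.load μ w :=
              Set.ncard_le_ncard hsub (Set.toFinite _)
        _ ≤ I.q w := hst.1.2 w
  -- τ dominates μ
  have hweak : ∀ v, I.WeakPref v τ μ := by
    intro v
    rcases hμv : μ v with _ | w0 <;> rcases hσv : σ v with _ | w1
    · exact Or.inl (by rw [hτ_eq v, hμv, hσv])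
    · exact Or.inr ⟨w1, by rw [hτ_eq v, hμv, hσv], Or.inl hμv⟩
    · exact Or.inl (by rw [hτ_eq v, hμv, hσv])
    · by_cases hlt : I.rkS v w1 < I.rkS v w0
      · exact Or.inr ⟨w1, by rw [hτ_eq v, hμv, hσv]; simp [hlt],
          Or.inr ⟨w0, hμv, hlt⟩⟩
      · exact Or.inl (by rw [hτ_eq v, hμv, hσv]; simp [hlt, hμv])
  have hbet : I.Better u τ μ := by
    have hne : μ u ≠ σ u := fun h => hw (Or.inl h)
    have hnb : ¬ I.Better u μ σ := fun h => hw (Or.inr h)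
    rcases hμu : μ u with _ | w0 <;> rcases hσu : σ u with _ | w1
    · exact absurd (hμu.trans hσu.symm) hne
    · exact ⟨w1, by rw [hτ_eq u, hμu, hσu], Or.inl hμu⟩
    · exact absurd ⟨w0, hμu, Or.inl hσu⟩ hnb
    · have hww : w0 ≠ w1 := fun h => hne (by rw [hμu, hσu, h])
      have hnlt : ¬ I.rkS u w0 < I.rkS u w1 :=
        fun h => hnb ⟨w0, hμu, Or.inr ⟨w1, hσu, h⟩⟩
      have hlt : I.rkS u w1 < I.rkS u w0 :=
        lt_of_le_of_ne (not_lt.mp hnlt)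
          (fun he => hww (I.rkS_inj u w0 (hμm u w0 hμu) w1 (hσm u w1 hσu) he.symm))
      exact ⟨w1, by rw [hτ_eq u, hμu, hσu]; simp [hlt], Or.inr ⟨w0, hμu, hlt⟩⟩
  exact heff τ hτfeas ⟨hweak, u, hbet⟩
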